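/- Let p ∈ (0,1), E a finite set, and G : E → {0,1}. If at most k < |E| edges of E are present in G (i.e. |{e ∈ E : G(e)=1}| ≤ k), then χ_E(G) = (-1)^{|E|-k} · Σ_{E' ⊆ E, |E'| ≤ k} binom(|E|-1-|E'|, |E|-1-k) · (-√(p/(1-p)))^{|E|-|E'|} · χ_{E'}(G). -/

import Mathlib

noncomputable def chi (p : ℝ) : Fin 2 → ℝ := fun e =>
  if e = 0 then Real.sqrt (p / (1 - p)) else -Real.sqrt ((1 - p) / p)

section Helpers
open Finset


lemma auxChoose (A K s : ℕ) (hs : s ≤ K) :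
    A.choose s * (A - s).choose (K - s) = A.choose K * K.choose s := by
  rcases le_or_gt K A with h | h
  · exact ((Nat.choose_mul hs).symm)
  · rcases le_or_gt s A with h2 | h2
    · rw [Nat.choose_eq_zero_of_lt (by omega : A < K),
        Nat.choose_eq_zero_of_lt (by omega : A - s < K - s)]
      ring
    · rw [Nat.choose_eq_zero_of_lt h2, Nat.choose_eq_zero_of_lt (by omega : A < K)]
      ring

lemma baseLem (A K : ℕ) :
    ∑ s ∈ range (K + 1), (-1 : ℤ) ^ s * A.choose s * (A - s).choose (K - s)
      = if K = 0 then 1 else 0 := by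
  have : ∀ s ∈ range (K + 1),
      (-1 : ℤ) ^ s * A.choose s * (A - s).choose (K - s)
        = (A.choose K : ℤ) * ((-1 : ℤ) ^ s * K.choose s) := by
    intro s hs
    rw [mem_range] at hs
    have := auxChoose A K s (by omega)
    have : (A.choose s : ℤ) * (A - s).choose (K - s) = A.choose K * K.choose s := by
      exact_mod_cast congrArg (Nat.cast : ℕ → ℤ) this
    rw [mul_assoc, this]; ring
  rw [Finset.sum_congr rfl this, ← Finset.mul_sum, Int.alternating_sum_range_choose]
  split <;> simp_all

lemma lemP : ∀ d A K : ℕ,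
    ∑ s ∈ range (K + 1), (-1 : ℤ) ^ s * A.choose s * (A + d - s).choose (K - s)
      = d.choose K := by
  intro d
  induction d with
  | zero =>
    intro A K
    simp only [Nat.add_zero]
    rw [baseLem A K]
    rcases Nat.eq_zero_or_pos K with rfl | h
    · simp
    · obtain ⟨K, rfl⟩ := Nat.exists_eq_succ_of_ne_zero (by omega : K ≠ 0)
      simp
  | succ d ih =>
    intro A K
    rcases Nat.eq_zero_or_pos K with rfl | hKpos
    · simp
    obtain ⟨K, rfl⟩ := Nat.exists_eq_succ_of_ne_zero (by omega : K ≠ 0)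
    rw [Finset.sum_range_succ]
    have hsplit : ∀ s ∈ range (K + 1),
        (-1 : ℤ) ^ s * A.choose s * (A + (d+1) - s).choose (K + 1 - s)
          = (-1 : ℤ) ^ s * A.choose s * (A + d - s).choose (K - s)
            + (-1 : ℤ) ^ s * A.choose s * (A + d - s).choose (K + 1 - s) := by
      intro s hs
      rw [mem_range] at hs
      rcases le_or_gt s (A + d) with hsd | hsd
      · have h1 : A + (d+1) - s = (A + d - s) + 1 := by omega
        have h2 : K + 1 - s = (K - s) + 1 := by omega
        rw [h1, h2, Nat.choose_succ_succ]
        push_cast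
        ring
      · rw [Nat.choose_eq_zero_of_lt (by omega : A < s)]
        push_cast
        ring
    rw [Finset.sum_congr rfl hsplit, Finset.sum_add_distrib]
    have e1 : ∑ s ∈ range (K + 1), (-1 : ℤ) ^ s * A.choose s * (A + d - s).choose (K - s)
        = d.choose K := ih A K
    have e2 : ∑ s ∈ range (K + 1 + 1), (-1 : ℤ) ^ s * A.choose s * (A + d - s).choose (K + 1 - s)
        = d.choose (K + 1) := ih A (K + 1)
    rw [Finset.sum_range_succ] at e2
    have h3 : (A + (d+1) - (K+1)).choose (K + 1 - (K+1)) = 1 := by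
      simp [Nat.sub_self]
    have h4 : (A + d - (K+1)).choose (K + 1 - (K+1)) = 1 := by
      simp [Nat.sub_self]
    rw [h4] at e2
    rw [e1, h3]
    have hp : (d+1).choose (K+1) = d.choose K + d.choose (K+1) := Nat.choose_succ_succ d K
    push_cast at e2 ⊢
    rw [Nat.succ_eq_add_one, hp]
    push_cast
    linarith

lemma lemQ (B : ℕ) : ∀ K : ℕ, K ≤ B →
    ∑ s ∈ range (K + 1), (-1 : ℤ) ^ s * (B+1).choose s * (B - s).choose (K - s)
      = (-1) ^ K := by
  intro K
  induction K with
  | zero => intro _; simp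
  | succ K ih =>
    intro hK
    have hbase := baseLem (B+1) (K+1)
    rw [if_neg (by omega)] at hbase
    have hsplit : ∀ s ∈ range (K + 1),
        (-1 : ℤ) ^ s * (B+1).choose s * (B + 1 - s).choose (K + 1 - s)
          = (-1 : ℤ) ^ s * (B+1).choose s * (B - s).choose (K - s)
            + (-1 : ℤ) ^ s * (B+1).choose s * (B - s).choose (K + 1 - s) := by
      intro s hs
      rw [mem_range] at hs
      have h1 : B + 1 - s = (B - s) + 1 := by omega
      have h2 : K + 1 - s = (K - s) + 1 := by omega
      rw [h1, h2, Nat.choose_succ_succ]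
      push_cast
      ring
    rw [Finset.sum_range_succ, Finset.sum_congr rfl hsplit, Finset.sum_add_distrib] at hbase
    have e1 := ih (by omega)
    rw [e1] at hbase
    rw [Finset.sum_range_succ]
    have h3 : (B + 1 - (K+1)).choose (K + 1 - (K+1)) = 1 := by simp [Nat.sub_self]
    have h4 : (B - (K+1)).choose (K + 1 - (K+1)) = 1 := by simp [Nat.sub_self]
    rw [h3] at hbase
    rw [h4]
    push_cast at hbase ⊢
    rw [pow_succ] at hbase ⊢
    linarith

lemma keyLem (n k t j : ℕ) (ht : t ≤ k) (hk : k < n) (hj : j ≤ t) :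
    ∑ s ∈ range (n - t + 1), (-1 : ℤ) ^ s * ((n - t).choose s) *
        (if j + s ≤ k then (((n - 1 - (j + s)).choose (n - 1 - k)) : ℤ) else 0)
      = if j = t then (-1 : ℤ) ^ (k - t) else 0 := by
  set F : ℕ → ℤ := fun s => (-1 : ℤ) ^ s * ((n - t).choose s) *
      (if j + s ≤ k then (((n - 1 - (j + s)).choose (n - 1 - k)) : ℤ) else 0) with hF
  set K := k - j with hK
  set N := max (n - t) K with hN
  have h1 : ∑ s ∈ range (n - t + 1), F s = ∑ s ∈ range (N + 1), F s := by
    apply Finset.sum_subset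
    · intro x hx; rw [mem_range] at *; omega
    · intro x _ hx
      rw [mem_range] at hx
      simp only [hF]
      rw [Nat.choose_eq_zero_of_lt (by omega : n - t < x)]
      push_cast; ring
  have h2 : ∑ s ∈ range (K + 1), F s = ∑ s ∈ range (N + 1), F s := by
    apply Finset.sum_subset
    · intro x hx; rw [mem_range] at *; omega
    · intro x _ hx
      rw [mem_range] at hx
      simp only [hF]
      rw [if_neg (by omega)]
      ring
  rw [h1, ← h2]
  have h3 : ∀ s ∈ range (K + 1),
      F s = (-1 : ℤ) ^ s * ((n - t).choose s) * ((n - 1 - (j + s)).choose (K - s)) := by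
    intro s hs
    rw [mem_range] at hs
    simp only [hF]
    rw [if_pos (by omega)]
    congr 2
    have e : (n - 1 - (j + s)) - (n - 1 - k) = K - s := by omega
    rw [← e]
    exact (Nat.choose_symm (by omega)).symm
  rw [Finset.sum_congr rfl h3]
  rcases eq_or_lt_of_le hj with rfl | hlt
  · rw [if_pos rfl]
    have e1 : ∀ s ∈ range (K + 1),
        (-1 : ℤ) ^ s * ((n - j).choose s) * ((n - 1 - (j + s)).choose (K - s))
          = (-1 : ℤ) ^ s * ((n - j - 1 + 1).choose s) * (((n - j - 1) - s).choose (K - s)) := by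
      intro s hs
      rw [mem_range] at hs
      have e2 : n - j - 1 + 1 = n - j := by omega
      have e3 : n - 1 - (j + s) = n - j - 1 - s := by omega
      rw [e2, e3]
    rw [Finset.sum_congr rfl e1, lemQ (n - j - 1) K (by omega)]
  · rw [if_neg (by omega)]
    have e1 : ∀ s ∈ range (K + 1),
        (-1 : ℤ) ^ s * ((n - t).choose s) * ((n - 1 - (j + s)).choose (K - s))
          = (-1 : ℤ) ^ s * ((n - t).choose s) * (((n - t) + (t - 1 - j) - s).choose (K - s)) := by
      intro s hs
      rw [mem_range] at hs
      have e2 : n - 1 - (j + s) = (n - t) + (t - 1 - j) - s := by omega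
      rw [e2]
    rw [Finset.sum_congr rfl e1, lemP (t - 1 - j) (n - t) K]
    rw [Nat.choose_eq_zero_of_lt (by omega)]
    simp

lemma sum_powerset_union {ι : Type*} [DecidableEq ι] (T U : Finset ι) (hTU : Disjoint T U)
    (f : Finset ι → ℝ) :
    ∑ S ∈ (T ∪ U).powerset, f S = ∑ A ∈ T.powerset, ∑ B ∈ U.powerset, f (A ∪ B) := by
  rw [← Finset.sum_product']
  refine Finset.sum_nbij' (fun S => (S ∩ T, S ∩ U)) (fun P => P.1 ∪ P.2) ?_ ?_ ?_ ?_ ?_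
  · intro S hS
    rw [Finset.mem_powerset] at hS
    rw [Finset.mem_product, Finset.mem_powerset, Finset.mem_powerset]
    exact ⟨Finset.inter_subset_right, Finset.inter_subset_right⟩
  · intro P hP
    rw [Finset.mem_product, Finset.mem_powerset, Finset.mem_powerset] at hP
    rw [Finset.mem_powerset]
    exact Finset.union_subset_union hP.1 hP.2
  · intro S hS
    rw [Finset.mem_powerset] at hS
    show S ∩ T ∪ S ∩ U = S
    rw [← Finset.inter_union_distrib_left]
    exact Finset.inter_eq_left.2 hS
  · intro P hP
    rw [Finset.mem_product, Finset.mem_powerset, Finset.mem_powerset] at hP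
    have h2T : P.2 ∩ T = ∅ := by
      rw [← Finset.disjoint_iff_inter_eq_empty]
      exact (Finset.disjoint_of_subset_right hP.2 hTU).symm
    have h1U : P.1 ∩ U = ∅ := by
      rw [← Finset.disjoint_iff_inter_eq_empty]
      exact Finset.disjoint_of_subset_left hP.1 hTU
    have e1 : (P.1 ∪ P.2) ∩ T = P.1 := by
      rw [Finset.union_inter_distrib_right, h2T, Finset.union_empty]
      exact Finset.inter_eq_left.2 hP.1
    have e2 : (P.1 ∪ P.2) ∩ U = P.2 := by
      rw [Finset.union_inter_distrib_right, h1U, Finset.empty_union]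
      exact Finset.inter_eq_left.2 hP.2
    simp [e1, e2]
  · intro S hS
    show f S = f (S ∩ T ∪ S ∩ U)
    rw [← Finset.inter_union_distrib_left, Finset.inter_eq_left.2 (Finset.mem_powerset.1 hS)]

lemma mainCalc {ι : Type*} [DecidableEq ι] (E T : Finset ι) (hTE : T ⊆ E) (k : ℕ)
    (f : ι → ℝ) (a b : ℝ)
    (hfT : ∀ e ∈ T, f e = -b) (hfU : ∀ e ∈ E \ T, f e = a)
    (ht : T.card ≤ k) (hk : k < E.card) :
    ∏ e ∈ E, f e
      = (-1 : ℝ) ^ (E.card - k) *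
          ∑ E' ∈ E.powerset.filter (fun E' => E'.card ≤ k),
            ((E.card - 1 - E'.card).choose (E.card - 1 - k) : ℝ) *
              (-a) ^ (E.card - E'.card) * ∏ e ∈ E', f e := by
  set n := E.card with hn
  set t := T.card with htc
  set U := E \ T with hUdef
  have hdisj : Disjoint T U := Finset.disjoint_sdiff
  have hE : T ∪ U = E := Finset.union_sdiff_of_subset hTE
  have hu : U.card = n - t := Finset.card_sdiff_of_subset hTE
  have htn : t ≤ n := Finset.card_le_card hTE
  -- LHS
  have hlhs : ∏ e ∈ E, f e = a ^ (n - t) * (-b) ^ t := by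
    rw [← Finset.prod_sdiff hTE]
    congr 1
    · rw [Finset.prod_congr rfl hfU, Finset.prod_const, hu]
    · rw [Finset.prod_congr rfl hfT, Finset.prod_const]
  set c : ℕ → ℝ := fun m => if m ≤ k then (((n - 1 - m).choose (n - 1 - k) : ℕ) : ℝ) else 0
    with hc
  -- RHS : remove the filter
  have h1 : ∑ E' ∈ E.powerset.filter (fun E' => E'.card ≤ k),
        ((n - 1 - E'.card).choose (n - 1 - k) : ℝ) * (-a) ^ (n - E'.card) * ∏ e ∈ E', f e
      = ∑ E' ∈ E.powerset, c E'.card * ((-a) ^ (n - E'.card) * ∏ e ∈ E', f e) := by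
    rw [Finset.sum_filter]
    refine Finset.sum_congr rfl fun E' _ => ?_
    by_cases h : E'.card ≤ k <;> simp [hc, h, mul_assoc]
  -- split the powerset sum
  have h2 : ∑ E' ∈ E.powerset, c E'.card * ((-a) ^ (n - E'.card) * ∏ e ∈ E', f e)
      = ∑ A ∈ T.powerset, ∑ B ∈ U.powerset,
          c (A.card + B.card) * ((-a) ^ (n - (A.card + B.card)) * ((-b) ^ A.card * a ^ B.card)) := by
    rw [← hE, sum_powerset_union T U hdisj]
    refine Finset.sum_congr rfl fun A hA => Finset.sum_congr rfl fun B hB => ?_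
    rw [Finset.mem_powerset] at hA hB
    have hdAB : Disjoint A B := hdisj.mono hA hB
    have hcard : (A ∪ B).card = A.card + B.card := Finset.card_union_of_disjoint hdAB
    have hprod : ∏ e ∈ A ∪ B, f e = (-b) ^ A.card * a ^ B.card := by
      rw [Finset.prod_union hdAB]
      congr 1
      · rw [Finset.prod_congr rfl fun e he => hfT e (hA he), Finset.prod_const]
      · rw [Finset.prod_congr rfl fun e he => hfU e (hB he), Finset.prod_const]
    rw [hcard, hprod]
  -- convert to sums over cardinalities
  have h3 : ∑ A ∈ T.powerset, ∑ B ∈ U.powerset,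
          c (A.card + B.card) * ((-a) ^ (n - (A.card + B.card)) * ((-b) ^ A.card * a ^ B.card))
      = ∑ j ∈ range (t + 1), t.choose j •
          ∑ s ∈ range (n - t + 1), (n - t).choose s •
            (c (j + s) * ((-a) ^ (n - (j + s)) * ((-b) ^ j * a ^ s))) := by
    rw [Finset.sum_powerset_apply_card
      (f := fun j => ∑ B ∈ U.powerset,
        c (j + B.card) * ((-a) ^ (n - (j + B.card)) * ((-b) ^ j * a ^ B.card)))]
    refine Finset.sum_congr rfl fun j _ => ?_
    congr 1
    rw [Finset.sum_powerset_apply_card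
      (f := fun s => c (j + s) * ((-a) ^ (n - (j + s)) * ((-b) ^ j * a ^ s))), hu]
  -- evaluate the inner sum
  have hinner : ∀ j ≤ t,
      ∑ s ∈ range (n - t + 1), (n - t).choose s •
          (c (j + s) * ((-a) ^ (n - (j + s)) * ((-b) ^ j * a ^ s)))
        = (-b) ^ j * (-a) ^ (n - j) * (if j = t then (-1 : ℝ) ^ (k - t) else 0) := by
    intro j hj
    have step : ∀ s ∈ range (n - t + 1), (n - t).choose s •
          (c (j + s) * ((-a) ^ (n - (j + s)) * ((-b) ^ j * a ^ s)))
        = ((-b) ^ j * (-a) ^ (n - j)) *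
            ((-1 : ℝ) ^ s * ((n - t).choose s : ℝ) * c (j + s)) := by
      intro s hs
      rw [mem_range] at hs
      have hsn : s ≤ n - j := by omega
      have hpow : (-a) ^ (n - (j + s)) * a ^ s = (-a) ^ (n - j) * (-1 : ℝ) ^ s := by
        have e : (-a) ^ (n - j) = (-a) ^ (n - (j + s)) * (-a) ^ s := by
          rw [← pow_add, (by omega : n - (j + s) + s = n - j)]
        have h2 : ((-1 : ℝ)) ^ s * (-1) ^ s = 1 := by
          rw [← mul_pow]; norm_num
        rw [e, neg_pow a s]
        linear_combination (-((-a) ^ (n - (j + s)) * a ^ s)) * h2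
      rw [nsmul_eq_mul]
      calc ((n - t).choose s : ℝ) * (c (j + s) * ((-a) ^ (n - (j + s)) * ((-b) ^ j * a ^ s)))
          = ((n - t).choose s : ℝ) * c (j + s) * ((-b) ^ j * ((-a) ^ (n - (j + s)) * a ^ s)) := by
            ring
        _ = _ := by rw [hpow]; ring
    rw [Finset.sum_congr rfl step, ← Finset.mul_sum]
    congr 1
    have key := keyLem n k t j ht hk hj
    have keyR := congrArg (Int.cast : ℤ → ℝ) key
    push_cast at keyR
    rw [← keyR]
  -- finish
  rw [hlhs, h1, h2, h3]
  rw [Finset.sum_congr rfl fun j hj => by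
    rw [hinner j (by rw [mem_range] at hj; omega)]]
  rw [Finset.sum_eq_single_of_mem t (self_mem_range_succ t)
    (fun j _ hjt => by rw [if_neg hjt]; simp)]
  rw [if_pos rfl, Nat.choose_self, one_smul]
  have hsgn : (-1 : ℝ) ^ (n - k) * ((-1 : ℝ) ^ (n - t) * (-1 : ℝ) ^ (k - t)) = 1 := by
    rw [← pow_add, ← pow_add, (by omega : n - k + (n - t + (k - t)) = 2 * (n - t)), pow_mul]
    norm_num
  rw [neg_pow a (n - t)]
  linear_combination (-(a ^ (n - t) * (-b) ^ t)) * hsgn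

end Helpers

theorem stmt5 {ι : Type*} [DecidableEq ι] (p : ℝ) (hp0 : 0 < p) (hp1 : p < 1)
    (E : Finset ι) (G : ι → Fin 2) (k : ℕ)
    (hG : (E.filter (fun e => G e = 1)).card ≤ k) (hk : k < E.card) :
    ∏ e ∈ E, chi p (G e)
      = (-1 : ℝ) ^ (E.card - k) *
          ∑ E' ∈ E.powerset.filter (fun E' => E'.card ≤ k),
            ((E.card - 1 - E'.card).choose (E.card - 1 - k) : ℝ) *
              (-Real.sqrt (p / (1 - p))) ^ (E.card - E'.card) *
              ∏ e ∈ E', chi p (G e) := by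
  have h2 : ∀ x : Fin 2, x ≠ 1 → x = 0 := by decide
  refine mainCalc E (E.filter (fun e => G e = 1)) (Finset.filter_subset _ _) k
    (fun e => chi p (G e)) (Real.sqrt (p / (1 - p))) (Real.sqrt ((1 - p) / p)) ?_ ?_ hG hk
  · intro e he
    show chi p (G e) = -Real.sqrt ((1 - p) / p)
    rw [(Finset.mem_filter.1 he).2]
    simp [chi]
  · intro e he
    rw [Finset.mem_sdiff, Finset.mem_filter] at he
    show chi p (G e) = Real.sqrt (p / (1 - p))
    rw [h2 (G e) (fun h => he.2 ⟨he.1, h⟩)]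
    simp [chi]
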